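/- The representation Π∘β of Gⁿ is equivalent to Π (i.e. there is a linear isomorphism T of V₁ ⊗ ⋯ ⊗ Vₙ with T∘Π(β(g)) = Π(g)∘T for all g ∈ Gⁿ) if and only if the representations ρ₁, …, ρₙ are pairwise equivalent. -/

import Mathlib

open scoped TensorProduct

namespace Stmt13Aux

open PiTensorProduct

variable {n : ℕ} {V : Fin n → Type*} [∀ i, AddCommGroup (V i)] [∀ i, Module ℂ (V i)]

/-- The product-of-functionals linear form on the tensor product. -/
noncomputable def prodFun (lam : ∀ k, Module.Dual ℂ (V k)) : (⨂[ℂ] i, V i) →ₗ[ℂ] ℂ :=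
  PiTensorProduct.lift ((MultilinearMap.mkPiAlgebra ℂ (Fin n) ℂ).compLinearMap lam)

@[simp] lemma prodFun_tprod (lam : ∀ k, Module.Dual ℂ (V k)) (w : ∀ k, V k) :
    prodFun lam (PiTensorProduct.tprod ℂ w) = ∏ k, lam k (w k) := by
  simp [prodFun]

lemma prod_update [DecidableEq (Fin n)] {i j : Fin n} (hji : j ≠ i)
    (lam : ∀ k, Module.Dual ℂ (V k)) (w : ∀ k, V k) (x : V j) :
    ∏ k ∈ Finset.univ.erase i, lam k (Function.update w j x k)
      = lam j x * ∏ k ∈ (Finset.univ.erase i).erase j, lam k (w k) := by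
  rw [← Finset.mul_prod_erase _ _ (by simp [hji] : j ∈ Finset.univ.erase i)]
  congr 1
  · rw [Function.update_self]
  · exact Finset.prod_congr rfl fun k hk => by
      rw [Function.update_of_ne (Finset.ne_of_mem_erase hk)]

/-- The multilinear map `w ↦ (∏_{k ≠ i} lam k (w k)) • w i`. -/
noncomputable def projML (i : Fin n) (lam : ∀ k, Module.Dual ℂ (V k)) :
    MultilinearMap ℂ V (V i) where
  toFun w := (∏ k ∈ Finset.univ.erase i, lam k (w k)) • w i
  map_update_add' w j x y := by
    rename_i inst
    have hinst : inst = instDecidableEqFin n := Subsingleton.elim _ _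
    subst hinst
    rcases eq_or_ne j i with rfl | hj
    · have hp : ∀ z : V j, ∏ k ∈ Finset.univ.erase j, lam k (Function.update w j z k)
          = ∏ k ∈ Finset.univ.erase j, lam k (w k) :=
        fun z => Finset.prod_congr rfl fun k hk => by
          rw [Function.update_of_ne (Finset.ne_of_mem_erase hk)]
      rw [hp, hp, hp]
      simp only [Function.update_self]
      rw [smul_add]
    · rw [prod_update hj, prod_update hj, prod_update hj,
        Function.update_of_ne hj.symm, Function.update_of_ne hj.symm,
        Function.update_of_ne hj.symm, map_add, add_mul, add_smul]
  map_update_smul' w j c x := by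
    rename_i inst
    have hinst : inst = instDecidableEqFin n := Subsingleton.elim _ _
    subst hinst
    rcases eq_or_ne j i with rfl | hj
    · have hp : ∀ z : V j, ∏ k ∈ Finset.univ.erase j, lam k (Function.update w j z k)
          = ∏ k ∈ Finset.univ.erase j, lam k (w k) :=
        fun z => Finset.prod_congr rfl fun z2 hk => by
          rw [Function.update_of_ne (Finset.ne_of_mem_erase hk)]
      rw [hp, hp]
      simp only [Function.update_self]
      rw [smul_comm]
    · rw [prod_update hj, prod_update hj, Function.update_of_ne hj.symm,
        Function.update_of_ne hj.symm, map_smul, smul_eq_mul, mul_assoc, mul_smul]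

@[simp] lemma projML_apply (i : Fin n) (lam : ∀ k, Module.Dual ℂ (V k)) (w : ∀ k, V k) :
    projML i lam w = (∏ k ∈ Finset.univ.erase i, lam k (w k)) • w i := rfl

lemma dual_comp_proj (i : Fin n) (lam : ∀ k, Module.Dual ℂ (V k)) (x : ⨂[ℂ] k, V k) :
    lam i (PiTensorProduct.lift (projML i lam) x) = prodFun lam x := by
  classical
  induction x using PiTensorProduct.induction_on with
  | smul_tprod r w =>
      simp only [map_smul, lift.tprod, projML_apply, prodFun_tprod, smul_eq_mul]
      congr 1
      exact Finset.prod_erase_mul _ _ (Finset.mem_univ i)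
  | add x y hx hy => simp [hx, hy]

/-- product functionals separate points of the tensor product of
finite-dimensional spaces. -/
lemma sep [∀ i, FiniteDimensional ℂ (V i)] (x : ⨂[ℂ] i, V i)
    (h : ∀ lam : ∀ k, Module.Dual ℂ (V k), prodFun lam x = 0) : x = 0 := by
  classical
  set b : ∀ k, Module.Basis (Fin (Module.finrank ℂ (V k))) ℂ (V k) :=
    fun k => Module.finBasis ℂ (V k) with hb
  have hspan' : ∀ y : ⨂[ℂ] i, V i,
      y ∈ Submodule.span ℂ (Set.range fun c : ∀ k, Fin (Module.finrank ℂ (V k)) =>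
      (PiTensorProduct.tprod ℂ fun k => b k (c k))) := by
    intro y
    induction y using PiTensorProduct.induction_on with
    | smul_tprod r w =>
        apply Submodule.smul_mem
        have hw : (fun k => w k) = fun k => ∑ m, (b k).repr (w k) m • b k m := by
          funext k
          exact ((b k).sum_repr (w k)).symm
        have : PiTensorProduct.tprod ℂ w
            = ∑ c : ∀ k, Fin (Module.finrank ℂ (V k)),
                (∏ k, (b k).repr (w k) (c k)) • PiTensorProduct.tprod ℂ fun k => b k (c k) := by
          conv_lhs => rw [show w = fun k => ∑ m, (b k).repr (w k) m • b k m from hw]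
          rw [MultilinearMap.map_sum (PiTensorProduct.tprod ℂ)]
          exact Finset.sum_congr rfl fun c _ =>
            MultilinearMap.map_smul_univ (PiTensorProduct.tprod ℂ) _ _
        rw [this]
        exact Submodule.sum_mem _ fun c _ =>
          Submodule.smul_mem _ _ (Submodule.subset_span ⟨c, rfl⟩)
    | add x y hx hy => exact Submodule.add_mem _ hx hy
  have hspan := hspan' x
  rw [Submodule.mem_span_range_iff_exists_fun] at hspan
  obtain ⟨a, ha⟩ := hspan
  have key : ∀ c0, a c0 = 0 := by
    intro c0
    have h0 := h fun k => (b k).coord (c0 k)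
    rw [← ha, map_sum] at h0
    have heach : ∀ c, prodFun (fun k => (b k).coord (c0 k))
        (a c • PiTensorProduct.tprod ℂ fun k => b k (c k))
        = if c = c0 then a c else 0 := by
      intro c
      rw [map_smul, prodFun_tprod]
      have : (∏ k, (b k).coord (c0 k) (b k (c k))) = if c = c0 then (1 : ℂ) else 0 := by
        by_cases hc : c = c0
        · subst hc
          simp
        · rw [if_neg hc]
          obtain ⟨k, hk⟩ := Function.ne_iff.mp hc
          refine Finset.prod_eq_zero (Finset.mem_univ k) ?_
          simp [Module.Basis.coord_apply, Module.Basis.repr_self, Finsupp.single_apply, hk]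
      rw [this]
      by_cases hc : c = c0 <;> simp [hc]
    rw [Finset.sum_congr rfl fun c _ => heach c] at h0
    simpa using h0
  rw [← ha]
  simp [key]

lemma tprod_ne_zero [∀ i, FiniteDimensional ℂ (V i)] (u : ∀ k, V k) (hu : ∀ k, u k ≠ 0) :
    PiTensorProduct.tprod ℂ u ≠ 0 := by
  intro h0
  have : ∀ k, ∃ lam : Module.Dual ℂ (V k), lam (u k) ≠ 0 := by
    intro k
    by_contra hc
    push_neg at hc
    exact hu k ((Module.forall_dual_apply_eq_zero_iff ℂ (u k)).mp fun φ => hc φ)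
  choose lam hlam using this
  have := prodFun_tprod lam u
  rw [h0, map_zero] at this
  exact Finset.prod_ne_zero_iff.mpr (fun k _ => hlam k) this.symm

/-- Schur's lemma form we need. -/
lemma schur {G : Type*} [Group G] {A B : Type*} [AddCommGroup A] [Module ℂ A]
    [AddCommGroup B] [Module ℂ B]
    (ρA : Representation ℂ G A) (ρB : Representation ℂ G B)
    (hA : ∀ W : Submodule ℂ A, (∀ g x, x ∈ W → ρA g x ∈ W) → W = ⊥ ∨ W = ⊤)
    (hB : ∀ W : Submodule ℂ B, (∀ g x, x ∈ W → ρB g x ∈ W) → W = ⊥ ∨ W = ⊤)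
    (f : A →ₗ[ℂ] B) (hf : ∀ g x, f (ρA g x) = ρB g (f x)) (hne : f ≠ 0) :
    ∃ e : A ≃ₗ[ℂ] B, ∀ g x, e (ρA g x) = ρB g (e x) := by
  have hker : LinearMap.ker f = ⊥ := by
    rcases hA (LinearMap.ker f) (fun g x hx => by
      rw [LinearMap.mem_ker, hf, LinearMap.mem_ker.mp hx, map_zero]) with h | h
    · exact h
    · exact absurd (LinearMap.ker_eq_top.mp h) hne
  have hrange : LinearMap.range f = ⊤ := by
    rcases hB (LinearMap.range f) (fun g y hy => by
      obtain ⟨x, rfl⟩ := hy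
      exact ⟨ρA g x, hf g x⟩) with h | h
    · exact absurd (LinearMap.range_eq_bot.mp h) hne
    · exact h
  refine ⟨LinearEquiv.ofBijective f
    ⟨LinearMap.ker_eq_bot.mp hker, LinearMap.range_eq_top.mp hrange⟩, fun g x => hf g x⟩

end Stmt13Aux

open Stmt13Aux

theorem stmt_13 {G : Type*} [Group G] (n : ℕ) [NeZero n]
    (V : Fin n → Type*) [∀ i, AddCommGroup (V i)] [∀ i, Module ℂ (V i)]
    [∀ i, FiniteDimensional ℂ (V i)] [∀ i, Nontrivial (V i)]
    (ρ : ∀ i, Representation ℂ G (V i))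
    (hirr : ∀ (i : Fin n) (W : Submodule ℂ (V i)),
      (∀ (g : G) (x : V i), x ∈ W → ρ i g x ∈ W) → W = ⊥ ∨ W = ⊤)
    (P : Representation ℂ (Fin n → G) (⨂[ℂ] i, V i))
    (hP : ∀ (g : Fin n → G) (v : (i : Fin n) → V i),
      P g (PiTensorProduct.tprod ℂ v) = PiTensorProduct.tprod ℂ (fun i => ρ i (g i) (v i))) :
    (∃ T : (⨂[ℂ] i, V i) ≃ₗ[ℂ] (⨂[ℂ] i, V i),
        ∀ (g : Fin n → G) (x : ⨂[ℂ] i, V i),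
          T (P (fun i => g (i - 1)) x) = P g (T x)) ↔
      ∀ i j : Fin n, ∃ e : V i ≃ₗ[ℂ] V j,
        ∀ (g : G) (x : V i), e (ρ i g x) = ρ j g (e x) := by
  classical
  set E : Fin n → Fin n → Prop := fun i j =>
    ∃ e : V i ≃ₗ[ℂ] V j, ∀ (g : G) (x : V i), e (ρ i g x) = ρ j g (e x) with hE
  have Erefl : ∀ i, E i i := fun i => ⟨LinearEquiv.refl ℂ (V i), fun g x => rfl⟩
  have Esymm : ∀ {i j}, E i j → E j i := by
    rintro i j ⟨e, he⟩
    refine ⟨e.symm, fun g y => ?_⟩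
    apply e.injective
    rw [he, e.apply_symm_apply, e.apply_symm_apply]
  have Etrans : ∀ {i j k}, E i j → E j k → E i k := by
    rintro i j k ⟨e, he⟩ ⟨f, hf⟩
    exact ⟨e.trans f, fun g x => by simp [LinearEquiv.trans_apply, he, hf]⟩
  constructor
  · rintro ⟨T, hT⟩
    -- step: E (i+1) i for each i
    have step : ∀ i : Fin n, E (i + 1) i := by
      intro i
      -- pick a nonzero vector in each factor
      have hune : ∀ k, ∃ u : V k, u ≠ 0 := fun k => exists_ne 0
      choose u hu using hune
      -- the inclusion of V (i+1) into the tensor product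
      set iota : V (i + 1) →ₗ[ℂ] ⨂[ℂ] k, V k :=
        (PiTensorProduct.tprod ℂ).toLinearMap u (i + 1) with hiota
      have hiota_apply : ∀ v, iota v = PiTensorProduct.tprod ℂ (Function.update u (i + 1) v) :=
        fun v => rfl
      set single : G → (Fin n → G) := fun h => Pi.mulSingle i h with hsingle
      -- equivariance of iota
      have hiotaeq : ∀ (h : G) (v : V (i + 1)),
          iota (ρ (i + 1) h v) = P (fun j => single h (j - 1)) (iota v) := by
        intro h v
        rw [hiota_apply, hiota_apply, hP]
        congr 1
        funext j
        rcases eq_or_ne j (i + 1) with rfl | hj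
        · rw [Function.update_self, Function.update_self]
          rw [show i + 1 - 1 = i from add_sub_cancel_right i 1, hsingle]
          simp only [Pi.mulSingle_eq_same]
        · have hj' : j - 1 ≠ i := fun hc => hj (by rw [← hc, sub_add_cancel])
          rw [Function.update_of_ne hj, Function.update_of_ne hj, hsingle]
          simp only [Pi.mulSingle_eq_of_ne hj', map_one, Module.End.one_apply]
      -- equivariance of the projections
      have hprojeq : ∀ (lam : ∀ k, Module.Dual ℂ (V k)) (h : G) (x : ⨂[ℂ] k, V k),
          PiTensorProduct.lift (projML i lam) (P (single h) x)
            = ρ i h (PiTensorProduct.lift (projML i lam) x) := by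
        intro lam h x
        induction x using PiTensorProduct.induction_on with
        | smul_tprod r w =>
            rw [map_smul, map_smul, hP, PiTensorProduct.lift.tprod, map_smul,
              PiTensorProduct.lift.tprod]
            simp only [projML_apply, hsingle, Pi.mulSingle_eq_same]
            have hprod : (∏ k ∈ Finset.univ.erase i, lam k (ρ k ((Pi.mulSingle i h : Fin n → G) k) (w k)))
                = ∏ k ∈ Finset.univ.erase i, lam k (w k) :=
              Finset.prod_congr rfl fun k hk => by
                rw [Pi.mulSingle_eq_of_ne (Finset.ne_of_mem_erase hk), map_one,
                  Module.End.one_apply]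
            rw [hprod]
            simp only [map_smul]
        | add x y hx hy => simp [hx, hy]
      -- the candidate intertwiners
      set F : (∀ k, Module.Dual ℂ (V k)) → (V (i + 1) →ₗ[ℂ] V i) := fun lam =>
        (PiTensorProduct.lift (projML i lam)) ∘ₗ (T : (⨂[ℂ] k, V k) →ₗ[ℂ] ⨂[ℂ] k, V k) ∘ₗ iota
        with hF
      have hFeq : ∀ lam (h : G) (v : V (i + 1)),
          F lam (ρ (i + 1) h v) = ρ i h (F lam v) := by
        intro lam h v
        simp only [hF, LinearMap.coe_comp, Function.comp_apply, LinearEquiv.coe_coe]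
        rw [hiotaeq, hT (single h) (iota v), hprojeq]
      -- find lam making F lam nonzero
      have hTne : T (PiTensorProduct.tprod ℂ u) ≠ 0 := by
        intro hc
        exact tprod_ne_zero u hu (by
          have := T.injective (by rw [hc, map_zero] : T (PiTensorProduct.tprod ℂ u) = T 0)
          exact this)
      have : ∃ lam, prodFun lam (T (PiTensorProduct.tprod ℂ u)) ≠ 0 := by
        by_contra hc
        push_neg at hc
        exact hTne (sep _ hc)
      obtain ⟨lam, hlam⟩ := this
      have hFne : F lam ≠ 0 := by
        intro hc
        apply hlam
        rw [← dual_comp_proj i lam]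
        have : F lam (u (i + 1)) = 0 := by rw [hc]; rfl
        simp only [hF, LinearMap.coe_comp, Function.comp_apply, LinearEquiv.coe_coe] at this
        rw [hiota_apply, Function.update_eq_self] at this
        rw [this, map_zero]
      exact schur (ρ (i + 1)) (ρ i) (hirr (i + 1)) (hirr i) (F lam) (hFeq lam) hFne
    -- chain the steps
    have down : ∀ i : Fin n, E i (i - 1) := by
      intro i
      have := step (i - 1)
      rwa [sub_add_cancel] at this
    open Fin.NatCast in
    have chain : ∀ (k : ℕ) (i : Fin n), E i (i - (k : Fin n)) := by
      intro k
      induction k with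
      | zero => intro i; simpa using Erefl i
      | succ m ih =>
          intro i
          have h1 := ih i
          have h2 := down (i - (m : Fin n))
          have h3 := Etrans h1 h2
          rw [sub_sub] at h3
          have h4 : ((m : Fin n) + 1) = (((m + 1 : ℕ)) : Fin n) := by push_cast; ring
          rwa [h4] at h3
    intro i j
    have := chain (i - j).val i
    rwa [Fin.cast_val_eq_self, sub_sub_cancel] at this
  · intro h
    -- construct T from the equivalences
    set σ : Fin n ≃ Fin n :=
      ⟨fun j => j - 1, fun j => j + 1, fun j => by simp, fun j => by simp⟩ with hσ
    have hf : ∀ j : Fin n, ∃ e : V (j + 1) ≃ₗ[ℂ] V j,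
        ∀ (g : G) (x : V (j + 1)), e (ρ (j + 1) g x) = ρ j g (e x) := fun j => h (j + 1) j
    choose f hfeq using hf
    refine ⟨(PiTensorProduct.reindex ℂ V σ).trans (PiTensorProduct.congr f), fun g x => ?_⟩
    induction x using PiTensorProduct.induction_on with
    | smul_tprod r v =>
        rw [map_smul, map_smul, map_smul, map_smul]
        congr 1
        rw [hP, LinearEquiv.trans_apply, LinearEquiv.trans_apply,
          PiTensorProduct.reindex_tprod, PiTensorProduct.reindex_tprod,
          PiTensorProduct.congr_tprod, PiTensorProduct.congr_tprod, hP]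
        congr 1
        funext j
        show f j (ρ (j + 1) (g ((j + 1) - 1)) (v (j + 1))) = ρ j (g j) (f j (v (j + 1)))
        rw [show (j + 1 : Fin n) - 1 = j from add_sub_cancel_right j 1]
        exact hfeq j (g j) (v (j + 1))
    | add x y hx hy =>
        rw [map_add, map_add, map_add, map_add, hx, hy]
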